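/- Let R = F_2[x,t]/(x^2 + tx + r(t)) and define deg f = max(deg f_0, deg f_1) for f = f_0 + x f_1 (with deg 0 = -∞). Let m = m_0 + x·m_1 and f = f_0 + x·f_1 be nonzero elements of R with deg m_1 - deg m_0 < -1 (i.e., deg m_1 ≤ deg m_0 - 2, including m_1 = 0). Then deg(m·f) = deg m + deg f. -/

import Mathlib

open Polynomial

private lemma wb_lt_add_one (a : WithBot ℕ) (h : a ≠ ⊥) : a < a + 1 := by
  have := WithBot.add_lt_add_left h (show (0:WithBot ℕ) < 1 by decide)
  simpa using this

private lemma wb_lt_add_two (a : WithBot ℕ) (h : a ≠ ⊥) : a < a + 2 := by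
  have := WithBot.add_lt_add_left h (show (0:WithBot ℕ) < 2 by decide)
  simpa using this

private lemma wb_le_add_two (a : WithBot ℕ) : a ≤ a + 2 :=
  le_add_of_nonneg_right (by decide)

/-- In `R = 𝔽₂[x,t]/(x² + tx + r(t))` with `deg r = 2`, writing elements uniquely as
`f₀ + x·f₁` with degree `max (deg f₀) (deg f₁)`, and products via
`m·f = [m₀f₀ + m₁f₁r] + x·[m₀f₁ + m₁f₀ + t f₁ m₁]`: if `deg m₁ - deg m₀ < -1` and
`m, f ≠ 0`, then `deg (m·f) = deg m + deg f`. -/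
theorem stmt_14 (r : Polynomial (ZMod 2)) (hr : r.degree = 2)
    (m0 m1 f0 f1 : Polynomial (ZMod 2))
    (hm : ¬(m0 = 0 ∧ m1 = 0)) (hf : ¬(f0 = 0 ∧ f1 = 0))
    (hcond : m1.degree + 2 ≤ m0.degree) :
    max (m0 * f0 + m1 * f1 * r).degree
        (m0 * f1 + m1 * f0 + Polynomial.X * f1 * m1).degree =
      max m0.degree m1.degree + max f0.degree f1.degree := by
  have hm0 : m0 ≠ 0 := by
    intro h
    subst h
    simp only [degree_zero, le_bot_iff] at hcond
    rcases WithBot.add_eq_bot.mp hcond with h | h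
    · exact hm ⟨rfl, degree_eq_bot.mp h⟩
    · exact absurd h (by decide)
  have hMne : m0.degree ≠ ⊥ := fun h => hm0 (degree_eq_bot.mp h)
  have hμM : m1.degree ≤ m0.degree := le_trans (wb_le_add_two _) hcond
  have hμ1M : m1.degree + 1 < m0.degree := by
    rcases eq_or_ne m1.degree ⊥ with hb | hb
    · rw [hb]
      rw [show (⊥ : WithBot ℕ) + 1 = ⊥ from rfl]
      exact Ne.bot_lt hMne
    · calc m1.degree + 1 < m1.degree + 1 + 1 :=
            wb_lt_add_one _ (by simp [WithBot.add_eq_bot, hb])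
        _ = m1.degree + 2 := by rw [add_assoc]; norm_num
        _ ≤ m0.degree := hcond
  have hmaxm : max m0.degree m1.degree = m0.degree := max_eq_left hμM
  rw [hmaxm]
  -- degree computations for the three B-terms and two A-terms
  have hdA1 : (m0 * f0).degree = m0.degree + f0.degree := degree_mul
  have hdA2 : (m1 * f1 * r).degree = m1.degree + 2 + f1.degree := by
    rw [degree_mul, degree_mul, hr, add_right_comm]
  have hdB1 : (m0 * f1).degree = m0.degree + f1.degree := degree_mul
  have hdB2 : (m1 * f0).degree = m1.degree + f0.degree := degree_mul
  have hdB3 : (X * f1 * m1 : Polynomial (ZMod 2)).degree = m1.degree + 1 + f1.degree := by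
    rw [degree_mul, degree_mul, degree_X]
    rw [show (1 : WithBot ℕ) + f1.degree + m1.degree = m1.degree + 1 + f1.degree by
      rw [add_comm, add_comm (1 : WithBot ℕ) f1.degree, ← add_assoc, add_right_comm]]
  apply le_antisymm
  · -- upper bound
    apply max_le
    · apply le_trans (degree_add_le _ _)
      apply max_le
      · rw [hdA1]; exact add_le_add le_rfl (le_max_left _ _)
      · rw [hdA2]; exact add_le_add hcond (le_max_right _ _)
    · apply le_trans (degree_add_le _ _)
      apply max_le
      · apply le_trans (degree_add_le _ _)
        apply max_le
        · rw [hdB1]; exact add_le_add le_rfl (le_max_right _ _)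
        · rw [hdB2]; exact add_le_add hμM (le_max_left _ _)
      · rw [hdB3]; exact add_le_add hμ1M.le (le_max_right _ _)
  · -- lower bound
    rcases le_or_gt f1.degree f0.degree with h01 | h01
    · -- max is f0.degree
      rw [max_eq_left h01]
      have hALE : (m1 * f1 * r).degree ≤ (m0 * f0).degree := by
        rw [hdA1, hdA2]; exact add_le_add hcond h01
      rcases lt_or_eq_of_le hALE with hlt | heq
      · refine le_trans ?_ (le_max_left _ _)
        rw [degree_add_eq_left_of_degree_lt hlt, hdA1]
      · -- tie case: cancellation may occur in A, but B has full degree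
        have hf0 : f0 ≠ 0 := by
          intro h
          subst h
          apply hf
          refine ⟨rfl, ?_⟩
          rw [degree_zero, le_bot_iff, degree_eq_bot] at h01
          exact h01
        have hd0ne : f0.degree ≠ ⊥ := fun h => hf0 (degree_eq_bot.mp h)
        have hAne : (m0 * f0).degree ≠ ⊥ := by
          rw [hdA1]; simp [WithBot.add_eq_bot, hMne, hd0ne]
        have hprodne : m1 * f1 * r ≠ 0 := by
          intro h
          rw [h, degree_zero] at heq
          exact hAne heq.symm
        have hm1ne : m1 ≠ 0 := fun h => hprodne (by rw [h]; ring)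
        have hf1ne : f1 ≠ 0 := fun h => hprodne (by rw [h]; ring)
        have hμne : m1.degree ≠ ⊥ := fun h => hm1ne (degree_eq_bot.mp h)
        have hd1ne : f1.degree ≠ ⊥ := fun h => hf1ne (degree_eq_bot.mp h)
        -- from the tie, f0.degree ≤ f1.degree, hence equal
        have hd01 : f1.degree = f0.degree := by
          refine le_antisymm h01 ?_
          have h1 : m0.degree + f0.degree ≤ m0.degree + f1.degree := by
            rw [← hdA1, ← heq, hdA2]
            exact add_le_add hcond le_rfl
          exact (WithBot.add_le_add_iff_left hMne).mp h1
        -- key identity: m1.degree + 2 + f0.degree = m0.degree + f0.degree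
        have hkey : m1.degree + 2 + f0.degree = m0.degree + f0.degree := by
          rw [← hdA1, ← heq, hdA2, hd01]
        refine le_trans ?_ (le_max_right _ _)
        have hlt1 : (m1 * f0).degree < (m0 * f1).degree := by
          rw [hdB2, hdB1, hd01, ← hkey,
            show m1.degree + 2 + f0.degree = m1.degree + f0.degree + 2 by
              rw [add_right_comm]]
          exact wb_lt_add_two _ (by simp [WithBot.add_eq_bot, hμne, hd0ne])
        have hlt2 : (X * f1 * m1 : Polynomial (ZMod 2)).degree < (m0 * f1).degree := by
          rw [hdB3, hdB1, hd01, ← hkey,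
            show m1.degree + 2 + f0.degree = m1.degree + 1 + f0.degree + 1 by
              rw [add_right_comm (m1.degree + 1) f0.degree 1, add_assoc m1.degree 1 1]
              norm_num]
          exact wb_lt_add_one _ (by simp [WithBot.add_eq_bot, hμne, hd0ne])
        have e1 : (m0 * f1 + m1 * f0).degree = (m0 * f1).degree :=
          degree_add_eq_left_of_degree_lt hlt1
        rw [degree_add_eq_left_of_degree_lt (by rw [e1]; exact hlt2), e1, hdB1, hd01]
    · -- f0.degree < f1.degree : B has full degree m0.degree + f1.degree
      rw [max_eq_right h01.le]
      have hf1ne : f1 ≠ 0 := by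
        intro h
        rw [h, degree_zero] at h01
        exact absurd h01 (by simp)
      have hd1ne : f1.degree ≠ ⊥ := fun h => hf1ne (degree_eq_bot.mp h)
      refine le_trans ?_ (le_max_right _ _)
      have hlt1 : (m1 * f0).degree < (m0 * f1).degree := by
        rw [hdB2, hdB1]
        calc m1.degree + f0.degree ≤ m0.degree + f0.degree := add_le_add hμM le_rfl
          _ < m0.degree + f1.degree := WithBot.add_lt_add_left hMne h01
      have hlt2 : (X * f1 * m1 : Polynomial (ZMod 2)).degree < (m0 * f1).degree := by
        rw [hdB3, hdB1]
        exact WithBot.add_lt_add_right hd1ne hμ1M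
      have e1 : (m0 * f1 + m1 * f0).degree = (m0 * f1).degree :=
        degree_add_eq_left_of_degree_lt hlt1
      rw [degree_add_eq_left_of_degree_lt (by rw [e1]; exact hlt2), e1, hdB1]
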